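/- Let A = K[[f_1,…,f_s]] ⊆ F = K[[x_1,…,x_n]] with the length of F/A as an A-module finite. Then there exists a finite partition P of (ℝ_{>0})^n such that every member σ of P is convex and closed under multiplication by positive real scalars, and for each σ ∈ P both maps a ↦ exp(A,a) and a ↦ in(A,a) are constant on σ. -/

import Mathlib

noncomputable section

namespace CanonicalFan

open MvPowerSeries

variable (K : Type*) [Field K] (n : ℕ)

/-- The weight `⟨a, α⟩ = ∑ i, a i * α i` of an exponent `α` with respect to `a`. -/
def weight (a : Fin n → ℝ) (α : Fin n →₀ ℕ) : ℝ := ∑ i, a i * (α i : ℝ)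

/-- The support of a formal power series. -/
def supp (f : MvPowerSeries (Fin n) K) : Set (Fin n →₀ ℕ) :=
  {α | MvPowerSeries.coeff α f ≠ 0}

/-- The `a`-valuation `ν(f,a)`, with the convention `ν(0,a) = +∞`. -/
def nu (a : Fin n → ℝ) (f : MvPowerSeries (Fin n) K) : EReal :=
  sInf ((fun α => ((weight n a α : ℝ) : EReal)) '' supp K n f)

open Classical in
/-- The `a`-initial form `in(f,a)` of a power series. -/
def initialForm (a : Fin n → ℝ) (f : MvPowerSeries (Fin n) K) :
    MvPowerSeries (Fin n) K :=
  fun α => if ((weight n a α : ℝ) : EReal) = nu K n a f then MvPowerSeries.coeff α f else 0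

open Classical in
/-- `exp(f,a)`: the `≺`-maximal element of the support of `in(f,a)`, where `≺` is the
well-ordering `r` (junk value `0` if no maximal element exists). -/
def exponent (r : (Fin n →₀ ℕ) → (Fin n →₀ ℕ) → Prop) (a : Fin n → ℝ)
    (f : MvPowerSeries (Fin n) K) : Fin n →₀ ℕ :=
  if h : ∃ β ∈ supp K n (initialForm K n a f),
      ∀ γ ∈ supp K n (initialForm K n a f), γ = β ∨ r γ β
  then h.choose else 0

/-- The `a`-leading monomial `M(f,a) = c_{exp(f,a)} x^{exp(f,a)}`. -/
def leadMon (r : (Fin n →₀ ℕ) → (Fin n →₀ ℕ) → Prop) (a : Fin n → ℝ)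
    (f : MvPowerSeries (Fin n) K) : MvPowerSeries (Fin n) K :=
  MvPowerSeries.monomial (exponent K n r a f)
    (MvPowerSeries.coeff (exponent K n r a f) f)

/-- The maximal ideal `(x_1, …, x_n)` of `K[[x_1,…,x_n]]`. -/
def mIdeal : Ideal (MvPowerSeries (Fin n) K) :=
  Ideal.span (Set.range (MvPowerSeries.X : Fin n → MvPowerSeries (Fin n) K))

/-- `K[[S]]`: the smallest `K`-subalgebra of `K[[x_1,…,x_n]]` containing `S` and closed in
the `(x_1,…,x_n)`-adic topology; concretely, the adic closure of `Algebra.adjoin K S`. -/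
def closedAdjoin (S : Set (MvPowerSeries (Fin n) K)) :
    Subalgebra K (MvPowerSeries (Fin n) K) where
  carrier := {f | ∀ N : ℕ, ∃ g ∈ Algebra.adjoin K S, f - g ∈ (mIdeal K n) ^ N}
  algebraMap_mem' c N :=
    ⟨algebraMap K _ c, Subalgebra.algebraMap_mem _ c, by simp [Ideal.zero_mem]⟩
  add_mem' {f g} hf hg N := by
    obtain ⟨p, hp, hfp⟩ := hf N
    obtain ⟨q, hq, hgq⟩ := hg N
    exact ⟨p + q, add_mem hp hq, by simpa [add_sub_add_comm] using Ideal.add_mem _ hfp hgq⟩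
  mul_mem' {f g} hf hg N := by
    obtain ⟨p, hp, hfp⟩ := hf N
    obtain ⟨q, hq, hgq⟩ := hg N
    refine ⟨p * q, mul_mem hp hq, ?_⟩
    have h : f * g - p * q = f * (g - q) + (f - p) * q := by ring
    rw [h]
    exact Ideal.add_mem _ (Ideal.mul_mem_left _ _ hgq) (Ideal.mul_mem_right _ _ hfp)

/-- `exp(A,a) = {exp(f,a) : f ∈ A, f ≠ 0}`. -/
def expSet (r : (Fin n →₀ ℕ) → (Fin n →₀ ℕ) → Prop) (a : Fin n → ℝ)
    (A : Set (MvPowerSeries (Fin n) K)) : Set (Fin n →₀ ℕ) :=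
  {β | ∃ f ∈ A, f ≠ 0 ∧ exponent K n r a f = β}

/-- `in(A,a) = K[[in(f,a) : f ∈ A ∖ {0}]]`. -/
def inAlgebra (a : Fin n → ℝ) (A : Set (MvPowerSeries (Fin n) K)) :
    Subalgebra K (MvPowerSeries (Fin n) K) :=
  closedAdjoin K n {g | ∃ f ∈ A, f ≠ 0 ∧ initialForm K n a f = g}

/-- `M(A,a) = K[[M(f,a) : f ∈ A ∖ {0}]]`. -/
def leadAlgebra (r : (Fin n →₀ ℕ) → (Fin n →₀ ℕ) → Prop) (a : Fin n → ℝ)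
    (A : Set (MvPowerSeries (Fin n) K)) : Subalgebra K (MvPowerSeries (Fin n) K) :=
  closedAdjoin K n {g | ∃ f ∈ A, f ≠ 0 ∧ leadMon K n r a f = g}

set_option synthInstance.maxHeartbeats 1000000 in
/-- The length of `F/A` as an `A`-module is finite. -/
def FiniteColength (A : Subalgebra K (MvPowerSeries (Fin n) K)) : Prop :=
  IsFiniteLength A
    (MvPowerSeries (Fin n) K ⧸ LinearMap.range (Algebra.linearMap A (MvPowerSeries (Fin n) K)))

/-- `{g_1,…,g_r}` is an `a`-canonical basis of `A`. -/
def IsCanonicalBasis (r : (Fin n →₀ ℕ) → (Fin n →₀ ℕ) → Prop) (a : Fin n → ℝ)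
    (A : Subalgebra K (MvPowerSeries (Fin n) K)) {m : ℕ}
    (g : Fin m → MvPowerSeries (Fin n) K) : Prop :=
  (∀ i, g i ∈ A ∧ g i ≠ 0) ∧
    leadAlgebra K n r a (A : Set (MvPowerSeries (Fin n) K)) =
      closedAdjoin K n (Set.range fun i => leadMon K n r a (g i))

/-- `{g_1,…,g_r}` is a minimal `a`-canonical basis of `A`. -/
def IsMinimalCanonicalBasis (r : (Fin n →₀ ℕ) → (Fin n →₀ ℕ) → Prop) (a : Fin n → ℝ)
    (A : Subalgebra K (MvPowerSeries (Fin n) K)) {m : ℕ}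
    (g : Fin m → MvPowerSeries (Fin n) K) : Prop :=
  IsCanonicalBasis K n r a A g ∧
    ∀ T : Set (MvPowerSeries (Fin n) K),
      T ⊂ Set.range (fun i => leadMon K n r a (g i)) →
        closedAdjoin K n T ≠ leadAlgebra K n r a (A : Set (MvPowerSeries (Fin n) K))

/-- `{g_1,…,g_r}` is the `a`-reduced canonical basis of `A`. -/
def IsReducedCanonicalBasis (r : (Fin n →₀ ℕ) → (Fin n →₀ ℕ) → Prop) (a : Fin n → ℝ)
    (A : Subalgebra K (MvPowerSeries (Fin n) K)) {m : ℕ}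
    (g : Fin m → MvPowerSeries (Fin n) K) : Prop :=
  IsMinimalCanonicalBasis K n r a A g ∧
    (∀ i, MvPowerSeries.coeff (exponent K n r a (g i)) (g i) = 1) ∧
    ∀ i, ∀ α ∈ supp K n (g i - leadMon K n r a (g i)),
      (MvPowerSeries.monomial α (1 : K)) ∉
        closedAdjoin K n (Set.range fun j => leadMon K n r a (g j))

/-- A power series is a (nonzero) monomial. -/
def IsMonomial (g : MvPowerSeries (Fin n) K) : Prop :=
  ∃ (α : Fin n →₀ ℕ) (c : K), c ≠ 0 ∧ g = MvPowerSeries.monomial α c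

/-! ### Auxiliary development -/

theorem mem_closedAdjoin_iff {S : Set (MvPowerSeries (Fin n) K)} {f : MvPowerSeries (Fin n) K} :
    f ∈ closedAdjoin K n S ↔
      ∀ N : ℕ, ∃ g ∈ Algebra.adjoin K S, f - g ∈ (mIdeal K n) ^ N :=
  Iff.rfl

theorem coeff_eq_apply (f : MvPowerSeries (Fin n) K) (α : Fin n →₀ ℕ) :
    MvPowerSeries.coeff α f = f α := rfl

theorem mem_supp_iff {f : MvPowerSeries (Fin n) K} {α : Fin n →₀ ℕ} :
    α ∈ supp K n f ↔ MvPowerSeries.coeff α f ≠ 0 := Iff.rfl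

theorem supp_nonempty {f : MvPowerSeries (Fin n) K} (hf : f ≠ 0) :
    (supp K n f).Nonempty := by
  by_contra h
  rw [Set.not_nonempty_iff_eq_empty] at h
  refine hf (MvPowerSeries.ext fun α => ?_)
  have : α ∉ supp K n f := by rw [h]; exact Set.notMem_empty α
  simpa [mem_supp_iff, not_not] using this

/-- Finitely many exponents of bounded coordinates. -/
theorem finite_coordBound (D : Fin n → ℕ) :
    {α : Fin n →₀ ℕ | ∀ i, α i ≤ D i}.Finite := by
  have hpi : {g : Fin n → ℕ | ∀ i, g i ≤ D i}.Finite := by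
    have := Set.Finite.pi (fun i : Fin n => Set.finite_Iic (D i))
    refine this.subset ?_
    intro g hg
    simpa [Set.mem_pi, Pi.le_def] using hg
  have hinj : Set.InjOn (fun (α : Fin n →₀ ℕ) (i : Fin n) => α i)
      ((fun (α : Fin n →₀ ℕ) (i : Fin n) => α i) ⁻¹' {g | ∀ i, g i ≤ D i}) :=
    fun α _ β _ h => DFunLike.coe_injective h
  exact (hpi.preimage hinj).subset (fun α hα => hα)

theorem finite_degLT (N : ℕ) : {α : Fin n →₀ ℕ | ∑ i, α i < N}.Finite := by
  refine (finite_coordBound n (fun _ => N)).subset ?_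
  intro α hα i
  calc α i ≤ ∑ j, α j :=
        Finset.single_le_sum (fun j _ => Nat.zero_le (α j)) (Finset.mem_univ i)
    _ ≤ N := le_of_lt hα

theorem weight_nonneg {a : Fin n → ℝ} (ha : ∀ i, 0 < a i) (α : Fin n →₀ ℕ) :
    0 ≤ weight n a α :=
  Finset.sum_nonneg fun i _ => mul_nonneg (ha i).le (Nat.cast_nonneg _)

theorem finite_weight_le {a : Fin n → ℝ} (ha : ∀ i, 0 < a i) (C : ℝ) :
    {α : Fin n →₀ ℕ | weight n a α ≤ C}.Finite := by
  refine (finite_coordBound n (fun i => Nat.ceil (C / a i))).subset ?_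
  intro α hα i
  have h1 : a i * (α i : ℝ) ≤ weight n a α :=
    Finset.single_le_sum (f := fun j => a j * (α j : ℝ))
      (fun j _ => mul_nonneg (ha j).le (Nat.cast_nonneg _)) (Finset.mem_univ i)
  have h2 : (α i : ℝ) ≤ C / a i := by
    rw [le_div_iff₀ (ha i), mul_comm]
    exact h1.trans hα
  have h3 : (α i : ℝ) ≤ (Nat.ceil (C / a i) : ℝ) := h2.trans (Nat.le_ceil _)
  exact_mod_cast h3

/-- For positive `a` and nonzero `f`, the weight attains a minimum on the support. -/
theorem exists_argmin {a : Fin n → ℝ} (ha : ∀ i, 0 < a i) {f : MvPowerSeries (Fin n) K}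
    (hf : f ≠ 0) :
    ∃ α₀ ∈ supp K n f, ∀ β ∈ supp K n f, weight n a α₀ ≤ weight n a β := by
  obtain ⟨α₁, hα₁⟩ := supp_nonempty K n hf
  have hTfin : (supp K n f ∩ {α | weight n a α ≤ weight n a α₁}).Finite :=
    (finite_weight_le n ha (weight n a α₁)).subset Set.inter_subset_right
  have hTne : (supp K n f ∩ {α | weight n a α ≤ weight n a α₁}).Nonempty :=
    ⟨α₁, hα₁, show weight n a α₁ ≤ weight n a α₁ from le_rfl⟩
  obtain ⟨α₀, hα₀T, hmin⟩ := Set.exists_min_image _ (weight n a) hTfin hTne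
  refine ⟨α₀, hα₀T.1, fun β hβ => ?_⟩
  by_cases hb : weight n a β ≤ weight n a α₁
  · exact hmin β ⟨hβ, hb⟩
  · exact (hmin α₁ ⟨hα₁, show weight n a α₁ ≤ weight n a α₁ from le_rfl⟩).trans (le_of_not_ge hb)

theorem nu_eq_of_argmin {a : Fin n → ℝ} {f : MvPowerSeries (Fin n) K} {α₀ : Fin n →₀ ℕ}
    (hα₀ : α₀ ∈ supp K n f) (hmin : ∀ β ∈ supp K n f, weight n a α₀ ≤ weight n a β) :
    nu K n a f = ((weight n a α₀ : ℝ) : EReal) := by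
  refine le_antisymm (sInf_le ⟨α₀, hα₀, rfl⟩) (le_sInf ?_)
  rintro x ⟨β, hβ, rfl⟩
  exact EReal.coe_le_coe_iff.mpr (hmin β hβ)

theorem coeff_initialForm (a : Fin n → ℝ) (f : MvPowerSeries (Fin n) K) (α : Fin n →₀ ℕ) :
    MvPowerSeries.coeff α (initialForm K n a f) =
      if ((weight n a α : ℝ) : EReal) = nu K n a f then MvPowerSeries.coeff α f else 0 := rfl

theorem mem_supp_initialForm_iff {a : Fin n → ℝ} {f : MvPowerSeries (Fin n) K}
    {α : Fin n →₀ ℕ} :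
    α ∈ supp K n (initialForm K n a f) ↔
      ((weight n a α : ℝ) : EReal) = nu K n a f ∧ α ∈ supp K n f := by
  rw [mem_supp_iff, mem_supp_iff, coeff_initialForm]
  split_ifs with h
  · exact ⟨fun hc => ⟨h, hc⟩, fun hc => hc.2⟩
  · simp [h]

theorem supp_initialForm_subset (a : Fin n → ℝ) (f : MvPowerSeries (Fin n) K) :
    supp K n (initialForm K n a f) ⊆ supp K n f :=
  fun _ h => (mem_supp_initialForm_iff K n |>.mp h).2

/-- In a finite nonempty set there is an `r`-maximal element. -/
theorem exists_rmax (r : (Fin n →₀ ℕ) → (Fin n →₀ ℕ) → Prop)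
    (hr : IsWellOrder (Fin n →₀ ℕ) r) {s : Set (Fin n →₀ ℕ)} (hfin : s.Finite)
    (hne : s.Nonempty) : ∃ β ∈ s, ∀ γ ∈ s, γ = β ∨ r γ β := by
  haveI := hr
  refine Set.Finite.induction_on (motive := fun s _ => s.Nonempty →
      ∃ β ∈ s, ∀ γ ∈ s, γ = β ∨ r γ β) s hfin (fun h => absurd h (by simp)) ?_ hne
  rintro x t hxt htfin ih -
  rcases t.eq_empty_or_nonempty with hte | htne
  · subst hte
    exact ⟨x, Set.mem_insert x ∅, fun γ hγ => Or.inl (by simpa using hγ)⟩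
  · obtain ⟨β, hβ, hmax⟩ := ih htne
    rcases trichotomous_of r x β with hxb | hxb | hxb
    · refine ⟨β, Set.mem_insert_of_mem x hβ, fun γ hγ => ?_⟩
      rcases hγ with hγ | hγ
      · exact Or.inr (hγ ▸ hxb)
      · exact hmax γ hγ
    · refine ⟨β, Set.mem_insert_of_mem x hβ, fun γ hγ => ?_⟩
      rcases hγ with hγ | hγ
      · exact Or.inl (hγ.trans hxb)
      · exact hmax γ hγ
    · refine ⟨x, Set.mem_insert x t, fun γ hγ => ?_⟩
      rcases hγ with hγ | hγ
      · exact Or.inl hγ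
      · rcases hmax γ hγ with h | h
        · exact Or.inr (h ▸ hxb)
        · exact Or.inr (Trans.trans h hxb)

theorem exponent_eq_of_max (r : (Fin n →₀ ℕ) → (Fin n →₀ ℕ) → Prop)
    (hr : IsWellOrder (Fin n →₀ ℕ) r) {a : Fin n → ℝ} {f : MvPowerSeries (Fin n) K}
    {β : Fin n →₀ ℕ} (hβ : β ∈ supp K n (initialForm K n a f))
    (hmax : ∀ γ ∈ supp K n (initialForm K n a f), γ = β ∨ r γ β) :
    exponent K n r a f = β := by
  haveI := hr
  have h : ∃ β ∈ supp K n (initialForm K n a f),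
      ∀ γ ∈ supp K n (initialForm K n a f), γ = β ∨ r γ β := ⟨β, hβ, hmax⟩
  rw [exponent, dif_pos h]
  obtain ⟨hc1, hc2⟩ := h.choose_spec
  rcases hc2 β hβ with h1 | h1
  · exact h1.symm
  · rcases hmax _ hc1 with h2 | h2
    · exact h2
    · exact absurd h1 (asymm h2)

theorem exponent_spec (r : (Fin n →₀ ℕ) → (Fin n →₀ ℕ) → Prop)
    (hr : IsWellOrder (Fin n →₀ ℕ) r) {a : Fin n → ℝ} (ha : ∀ i, 0 < a i)
    {f : MvPowerSeries (Fin n) K} (hf : f ≠ 0) :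
    exponent K n r a f ∈ supp K n (initialForm K n a f) ∧
      ∀ γ ∈ supp K n (initialForm K n a f), γ = exponent K n r a f ∨ r γ (exponent K n r a f) := by
  obtain ⟨α₀, hα₀, hmin⟩ := exists_argmin K n ha hf
  have hnu := nu_eq_of_argmin K n hα₀ hmin
  have hne : (supp K n (initialForm K n a f)).Nonempty :=
    ⟨α₀, (mem_supp_initialForm_iff K n).mpr ⟨hnu.symm, hα₀⟩⟩
  have hfin : (supp K n (initialForm K n a f)).Finite :=
    ((finite_weight_le n ha (weight n a α₀)).subset (fun β hβ => by
      obtain ⟨hw, _⟩ := (mem_supp_initialForm_iff K n).mp hβ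
      rw [hnu] at hw
      exact le_of_eq (EReal.coe_eq_coe_iff.mp hw)))
  obtain ⟨β, hβ, hmax⟩ := exists_rmax n r hr hfin hne
  rw [exponent_eq_of_max K n r hr hβ hmax]
  exact ⟨hβ, hmax⟩

theorem exponent_congr (r : (Fin n →₀ ℕ) → (Fin n →₀ ℕ) → Prop) {a b : Fin n → ℝ}
    {f g : MvPowerSeries (Fin n) K}
    (h : initialForm K n a f = initialForm K n b g) :
    exponent K n r a f = exponent K n r b g := by
  unfold exponent
  rw [h]

theorem initialForm_monomial (a : Fin n → ℝ) (α : Fin n →₀ ℕ) {c : K} (hc : c ≠ 0) :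
    initialForm K n a (MvPowerSeries.monomial α c) = MvPowerSeries.monomial α c := by
  classical
  have hsupp : supp K n (MvPowerSeries.monomial α c) = {α} := by
    ext β
    by_cases hβ : β = α <;>
      simp [mem_supp_iff, MvPowerSeries.coeff_monomial, hβ, hc]
  have hnu : nu K n a (MvPowerSeries.monomial α c) = ((weight n a α : ℝ) : EReal) := by
    rw [nu, hsupp, Set.image_singleton, sInf_singleton]
  refine MvPowerSeries.ext fun β => ?_
  rw [coeff_initialForm, hnu, MvPowerSeries.coeff_monomial]
  by_cases hβ : β = α
  · subst hβ; simp
  · simp [hβ]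

theorem exponent_monomial (r : (Fin n →₀ ℕ) → (Fin n →₀ ℕ) → Prop)
    (hr : IsWellOrder (Fin n →₀ ℕ) r) (a : Fin n → ℝ) (α : Fin n →₀ ℕ) {c : K} (hc : c ≠ 0) :
    exponent K n r a (MvPowerSeries.monomial α c) = α := by
  classical
  have hsupp : supp K n (MvPowerSeries.monomial α c) = {α} := by
    ext β
    by_cases hβ : β = α <;>
      simp [mem_supp_iff, MvPowerSeries.coeff_monomial, hβ, hc]
  refine exponent_eq_of_max K n r hr ?_ ?_
  · rw [initialForm_monomial K n a α hc, hsupp]; exact rfl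
  · rw [initialForm_monomial K n a α hc, hsupp]
    exact fun γ hγ => Or.inl hγ

/-- The set of power series of order at least `k`. -/
def JSet (k : ℕ) : Set (MvPowerSeries (Fin n) K) :=
  {f | ∀ α : Fin n →₀ ℕ, (∑ i, α i) < k → MvPowerSeries.coeff α f = 0}

theorem JSet_antitone {k l : ℕ} (h : k ≤ l) : JSet K n l ⊆ JSet K n k :=
  fun _ hf α hα => hf α (lt_of_lt_of_le hα h)

theorem monomial_mem_JSet {k : ℕ} {α : Fin n →₀ ℕ} (h : k ≤ ∑ i, α i) (c : K) :
    (MvPowerSeries.monomial α c : MvPowerSeries (Fin n) K) ∈ JSet K n k := by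
  classical
  intro β hβ
  rw [MvPowerSeries.coeff_monomial, if_neg]
  rintro rfl
  exact absurd h (not_le.mpr hβ)

theorem zero_mem_JSet (k : ℕ) : (0 : MvPowerSeries (Fin n) K) ∈ JSet K n k :=
  fun α _ => map_zero _

theorem sub_mem_JSet {k : ℕ} {f g : MvPowerSeries (Fin n) K}
    (hf : f ∈ JSet K n k) (hg : g ∈ JSet K n k) : f - g ∈ JSet K n k := by
  intro α hα
  rw [map_sub, hf α hα, hg α hα, sub_zero]

theorem add_mem_JSet {k : ℕ} {f g : MvPowerSeries (Fin n) K}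
    (hf : f ∈ JSet K n k) (hg : g ∈ JSet K n k) : f + g ∈ JSet K n k := by
  intro α hα
  rw [map_add, hf α hα, hg α hα, add_zero]

theorem mul_mem_JSet {k : ℕ} {f g : MvPowerSeries (Fin n) K}
    (hg : g ∈ JSet K n k) : f * g ∈ JSet K n k := by
  classical
  intro α hα
  rw [MvPowerSeries.coeff_mul]
  refine Finset.sum_eq_zero fun p hp => ?_
  replace hp : p.1 + p.2 = α := Finset.HasAntidiagonal.mem_antidiagonal.mp hp
  have h2 : (∑ i, p.2 i) ≤ ∑ i, α i := by
    refine Finset.sum_le_sum fun i _ => ?_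
    calc p.2 i ≤ p.1 i + p.2 i := Nat.le_add_left _ _
      _ = α i := by rw [← Finsupp.add_apply, hp]
  rw [hg p.2 (lt_of_le_of_lt h2 hα), mul_zero]

/-- Every power series of order `≥ k` lies in the `k`-th power of the maximal ideal. -/
theorem JSet_subset_pow : ∀ (k : ℕ), JSet K n k ⊆ ((mIdeal K n) ^ k : Ideal _) := by
  classical
  intro k
  induction k with
  | zero => intro f _; simp [Ideal.one_eq_top]
  | succ k ih =>
    intro f hf
    -- split f as ∑ i, X i * g i
    classical
    set g : Fin n → MvPowerSeries (Fin n) K := fun i α =>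
      if ∀ j, j < i → α j = 0 then
        MvPowerSeries.coeff (α + Finsupp.single i 1) f else 0 with hg
    have hgc : ∀ (i : Fin n) (α : Fin n →₀ ℕ), MvPowerSeries.coeff α (g i) =
        if ∀ j, j < i → α j = 0 then
          MvPowerSeries.coeff (α + Finsupp.single i 1) f else 0 := fun i α => rfl
    have hgJ : ∀ i, g i ∈ JSet K n k := by
      intro i α hα
      rw [hgc]
      split_ifs with hcond
      · refine hf _ ?_
        have hs : (∑ j, (α + Finsupp.single i 1 : Fin n →₀ ℕ) j) = (∑ j, α j) + 1 := by
          simp [Finsupp.add_apply, Finset.sum_add_distrib, Finsupp.single_apply]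
        rw [hs]
        omega
      · rfl
    have hsum : f = ∑ i, MvPowerSeries.X i * g i := by
      refine MvPowerSeries.ext fun β => ?_
      rw [map_sum]
      rcases eq_or_ne β 0 with rfl | hβ0
      · rw [hf 0 (by simp)]
        refine (Finset.sum_eq_zero fun i _ => ?_).symm
        rw [MvPowerSeries.X_def, MvPowerSeries.coeff_monomial_mul, if_neg]
        intro hle
        have := hle i
        simp [Finsupp.single_apply] at this
      · have hsupp : β.support.Nonempty := Finsupp.support_nonempty_iff.mpr hβ0
        set i₀ := β.support.min' hsupp with hi₀
        have hi₀mem : i₀ ∈ β.support := β.support.min'_mem hsupp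
        have hβi₀ : β i₀ ≠ 0 := Finsupp.mem_support_iff.mp hi₀mem
        have hmin : ∀ j, j < i₀ → β j = 0 := by
          intro j hj
          by_contra hjne
          exact absurd (β.support.min'_le j (Finsupp.mem_support_iff.mpr hjne)) (not_le.mpr hj)
        rw [Finset.sum_eq_single i₀ ?_ (fun h => absurd (Finset.mem_univ i₀) h)]
        · rw [MvPowerSeries.X_def, MvPowerSeries.coeff_monomial_mul, if_pos
            (Finsupp.single_le_iff.mpr (Nat.one_le_iff_ne_zero.mpr hβi₀)), one_mul,
            hgc]
          rw [if_pos, tsub_add_cancel_of_le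
            (Finsupp.single_le_iff.mpr (Nat.one_le_iff_ne_zero.mpr hβi₀))]
          intro j hj
          rw [Finsupp.tsub_apply, hmin j hj, Finsupp.single_apply, if_neg (by omega)]
          rfl
        · intro i _ hi
          rw [MvPowerSeries.X_def, MvPowerSeries.coeff_monomial_mul]
          split_ifs with hle
          · rw [hgc, if_neg, mul_zero]
            intro hcond
            rcases lt_or_gt_of_ne hi with hlt | hgt
            · -- i < i₀ : then β i = 0 but single i 1 ≤ β
              have := Finsupp.single_le_iff.mp hle
              rw [hmin i hlt] at this
              omega
            · -- i > i₀ : condition fails at j = i₀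
              have := hcond i₀ hgt
              rw [Finsupp.tsub_apply, Finsupp.single_apply, if_neg (by omega)] at this
              omega
          · rfl
    rw [hsum]
    refine Ideal.sum_mem _ fun i _ => ?_
    rw [pow_succ']
    exact Ideal.mul_mem_mul (Ideal.subset_span ⟨i, rfl⟩) (ih (hgJ i))

theorem subset_closedAdjoin' (S : Set (MvPowerSeries (Fin n) K)) :
    S ⊆ (closedAdjoin K n S : Set (MvPowerSeries (Fin n) K)) := by
  intro g hg N
  exact ⟨g, Algebra.subset_adjoin hg, by simp [Ideal.zero_mem]⟩

theorem closedAdjoin_le_closedAdjoin {S T : Set (MvPowerSeries (Fin n) K)}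
    (h : S ⊆ (closedAdjoin K n T : Set (MvPowerSeries (Fin n) K))) :
    closedAdjoin K n S ≤ closedAdjoin K n T := by
  intro g hg
  intro N
  obtain ⟨q, hq, hgq⟩ := hg N
  obtain ⟨q', hq', hqq'⟩ := (Algebra.adjoin_le h hq : q ∈ closedAdjoin K n T) N
  refine ⟨q', hq', ?_⟩
  have : g - q' = (g - q) + (q - q') := by ring
  rw [this]
  exact Ideal.add_mem _ hgq hqq'

open Classical in
/-- Truncation of a power series below degree `N`. -/
def trunc (N : ℕ) (f : MvPowerSeries (Fin n) K) : MvPowerSeries (Fin n) K :=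
  fun α => if (∑ i, α i) < N then MvPowerSeries.coeff α f else 0

theorem coeff_trunc (N : ℕ) (f : MvPowerSeries (Fin n) K) (α : Fin n →₀ ℕ) :
    MvPowerSeries.coeff α (trunc K n N f) =
      if (∑ i, α i) < N then MvPowerSeries.coeff α f else 0 := rfl

theorem sub_trunc_mem_JSet (N : ℕ) (f : MvPowerSeries (Fin n) K) :
    f - trunc K n N f ∈ JSet K n N := by
  intro α hα
  rw [map_sub, coeff_trunc, if_pos hα, sub_self]

theorem supp_trunc_subset (N : ℕ) (f : MvPowerSeries (Fin n) K) :
    supp K n (trunc K n N f) ⊆ supp K n f := by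
  intro α hα
  rw [mem_supp_iff, coeff_trunc] at hα
  rw [mem_supp_iff]
  by_cases h : (∑ i, α i) < N
  · rwa [if_pos h] at hα
  · rw [if_neg h] at hα; exact absurd rfl hα

theorem supp_trunc_degLT (N : ℕ) (f : MvPowerSeries (Fin n) K) :
    ∀ α ∈ supp K n (trunc K n N f), (∑ i, α i) < N := by
  intro α hα
  rw [mem_supp_iff, coeff_trunc] at hα
  by_contra h
  rw [if_neg h] at hα
  exact hα rfl

theorem supp_finite_of_degLT {N : ℕ} {f : MvPowerSeries (Fin n) K}
    (h : ∀ α ∈ supp K n f, (∑ i, α i) < N) : (supp K n f).Finite :=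
  (finite_degLT n N).subset h

/-- A power series with finite support is the sum of its monomials. -/
theorem eq_sum_monomial {f : MvPowerSeries (Fin n) K} (h : (supp K n f).Finite) :
    f = ∑ α ∈ h.toFinset, MvPowerSeries.monomial α (MvPowerSeries.coeff α f) := by
  classical
  refine MvPowerSeries.ext fun β => ?_
  rw [map_sum]
  rw [Finset.sum_congr rfl (fun α _ => MvPowerSeries.coeff_monomial β α _)]
  rw [Finset.sum_ite_eq h.toFinset β (fun α => MvPowerSeries.coeff α f)]
  split_ifs with hβ
  · rfl
  · rw [Set.Finite.mem_toFinset] at hβ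
    simpa [mem_supp_iff, not_not] using hβ

set_option synthInstance.maxHeartbeats 1000000 in
set_option maxHeartbeats 1000000 in
/-- Main consequence of finite colength: `A` contains all series of sufficiently high order. -/
theorem exists_JSet_subset_A (A : Subalgebra K (MvPowerSeries (Fin n) K))
    (S : Set (MvPowerSeries (Fin n) K)) (hA : A = closedAdjoin K n S)
    (hlen : FiniteColength K n A) :
    ∃ N : ℕ, JSet K n N ⊆ (A : Set (MvPowerSeries (Fin n) K)) := by
  classical
  set R := LinearMap.range (Algebra.linearMap A (MvPowerSeries (Fin n) K)) with hR
  haveI hart : IsArtinian A (MvPowerSeries (Fin n) K ⧸ R) :=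
    (isFiniteLength_iff_isNoetherian_isArtinian.mp hlen).2
  -- `JSet k` as an `A`-submodule of `F`
  have hsmul : ∀ (k : ℕ) (c : A) (f : MvPowerSeries (Fin n) K), f ∈ JSet K n k →
      c • f ∈ JSet K n k := by
    intro k c f hf
    have : c • f = (c : MvPowerSeries (Fin n) K) * f := by
      rw [Algebra.smul_def]
      rfl
    rw [this]
    exact mul_mem_JSet K n hf
  set JMod : ℕ → Submodule A (MvPowerSeries (Fin n) K) := fun k =>
    { carrier := JSet K n k
      add_mem' := fun hf hg => add_mem_JSet K n hf hg
      zero_mem' := zero_mem_JSet K n k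
      smul_mem' := fun c f hf => hsmul k c f hf } with hJMod
  set c : ℕ →o (Submodule A (MvPowerSeries (Fin n) K ⧸ R))ᵒᵈ :=
    ⟨fun k => (JMod k).map R.mkQ, by
      intro k l hkl
      exact Submodule.map_mono (fun f hf => JSet_antitone K n hkl hf)⟩ with hc
  obtain ⟨N, hN⟩ := IsArtinian.monotone_stabilizes c
  refine ⟨N, fun f hf => ?_⟩
  -- show f ∈ A
  rw [hA]
  intro M
  have hfk : ∃ h ∈ JMod (max M N), f - h ∈ (A : Set (MvPowerSeries (Fin n) K)) := by
    have hstab : Submodule.map R.mkQ (JMod N) = Submodule.map R.mkQ (JMod (max M N)) :=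
      hN (max M N) (le_max_right M N)
    have h1 : R.mkQ f ∈ Submodule.map R.mkQ (JMod (max M N)) := by
      rw [← hstab]
      exact ⟨f, hf, rfl⟩
    obtain ⟨h, hh, hhf⟩ := h1
    refine ⟨h, hh, ?_⟩
    have hmem : f - h ∈ R := by
      have := (Submodule.Quotient.eq R).mp hhf.symm
      simpa using this
    obtain ⟨a, ha⟩ := hmem
    rw [← ha]
    exact a.2
  obtain ⟨h, hh, hfh⟩ := hfk
  have hfhA : f - h ∈ closedAdjoin K n S := hA ▸ hfh
  obtain ⟨q, hq, hq2⟩ := hfhA M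
  refine ⟨q, hq, ?_⟩
  have hdecomp : f - q = ((f - h) - q) + h := by ring
  rw [hdecomp]
  refine Ideal.add_mem _ hq2 ?_
  exact Ideal.pow_le_pow_right (le_max_left M N) (JSet_subset_pow K n (max M N) hh)

theorem monomial_ne_zero (α : Fin n →₀ ℕ) :
    (MvPowerSeries.monomial α (1 : K)) ≠ 0 := by
  intro h
  have := MvPowerSeries.coeff_monomial_same (R := K) α (1 : K)
  rw [h, map_zero] at this
  exact one_ne_zero this.symm

/-- `a` and `b` order the exponents of degree `< N` identically. -/
def SamePattern (N : ℕ) (a b : Fin n → ℝ) : Prop :=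
  ∀ α β : Fin n →₀ ℕ, (∑ i, α i) < N → (∑ i, β i) < N →
    ((weight n a α ≤ weight n a β) ↔ (weight n b α ≤ weight n b β))

theorem SamePattern.symm {N : ℕ} {a b : Fin n → ℝ} (h : SamePattern n N a b) :
    SamePattern n N b a := fun α β h1 h2 => (h α β h1 h2).symm

/-- Initial forms of polynomials supported in degree `< N` agree for weights with the
same pattern. -/
theorem initialForm_pattern_eq {a b : Fin n → ℝ} (ha : ∀ i, 0 < a i) (hb : ∀ i, 0 < b i)
    {N : ℕ} (hpat : SamePattern n N a b) {p : MvPowerSeries (Fin n) K} (hp : p ≠ 0)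
    (hsupp : ∀ α ∈ supp K n p, (∑ i, α i) < N) :
    initialForm K n a p = initialForm K n b p := by
  obtain ⟨α₀, hα₀, hmina⟩ := exists_argmin K n ha hp
  obtain ⟨β₀, hβ₀, hminb⟩ := exists_argmin K n hb hp
  have hnua := nu_eq_of_argmin K n hα₀ hmina
  have hnub := nu_eq_of_argmin K n hβ₀ hminb
  have key : ∀ α ∈ supp K n p,
      (weight n a α = weight n a α₀ ↔ weight n b α = weight n b β₀) := by
    intro α hα
    constructor
    · intro h
      have hbmin : ∀ γ ∈ supp K n p, weight n b α ≤ weight n b γ := fun γ hγ =>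
        (hpat α γ (hsupp α hα) (hsupp γ hγ)).mp (h ▸ hmina γ hγ)
      exact le_antisymm (hbmin β₀ hβ₀) (hminb α hα)
    · intro h
      have hamin : ∀ γ ∈ supp K n p, weight n a α ≤ weight n a γ := fun γ hγ =>
        (hpat α γ (hsupp α hα) (hsupp γ hγ)).mpr (h ▸ hminb γ hγ)
      exact le_antisymm (hamin α₀ hα₀) (hmina α hα)
  refine MvPowerSeries.ext fun α => ?_
  rw [coeff_initialForm, coeff_initialForm, hnua, hnub]
  by_cases hα : α ∈ supp K n p
  · exact if_congr (by rw [EReal.coe_eq_coe_iff, EReal.coe_eq_coe_iff]; exact key α hα) rfl rfl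
  · have h0 : MvPowerSeries.coeff α p = 0 := by
      simpa [mem_supp_iff, not_not] using hα
    simp [h0]

/-- The truncation of `f` keeps the `a`-initial data when the exponent has low degree. -/
theorem trunc_initial_data {a : Fin n → ℝ} (ha : ∀ i, 0 < a i) {N : ℕ}
    {f : MvPowerSeries (Fin n) K} (hf0 : f ≠ 0) {β : Fin n →₀ ℕ}
    (hβin : β ∈ supp K n (initialForm K n a f)) (hβdeg : (∑ i, β i) < N) :
    trunc K n N f ≠ 0 ∧ nu K n a (trunc K n N f) = nu K n a f ∧
      β ∈ supp K n (initialForm K n a (trunc K n N f)) ∧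
      supp K n (initialForm K n a (trunc K n N f)) ⊆ supp K n (initialForm K n a f) := by
  obtain ⟨hβw, hβsupp⟩ := (mem_supp_initialForm_iff K n).mp hβin
  have hβp : MvPowerSeries.coeff β (trunc K n N f) ≠ 0 := by
    rw [coeff_trunc, if_pos hβdeg]
    exact hβsupp
  have hp0 : trunc K n N f ≠ 0 := fun h => hβp (by rw [h, map_zero])
  obtain ⟨α₀, hα₀, hminf⟩ := exists_argmin K n ha hf0
  obtain ⟨γ₀, hγ₀, hminp⟩ := exists_argmin K n ha hp0
  have hnuf := nu_eq_of_argmin K n hα₀ hminf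
  have hnup := nu_eq_of_argmin K n hγ₀ hminp
  have hwβ : weight n a β = weight n a α₀ := by
    rw [hnuf] at hβw
    exact EReal.coe_eq_coe_iff.mp hβw
  have h1 : weight n a γ₀ ≤ weight n a α₀ := hwβ ▸ hminp β hβp
  have h2 : weight n a α₀ ≤ weight n a γ₀ := hminf γ₀ (supp_trunc_subset K n N f hγ₀)
  have hnueq : nu K n a (trunc K n N f) = nu K n a f := by
    rw [hnuf, hnup, EReal.coe_eq_coe_iff]
    exact le_antisymm h1 h2
  refine ⟨hp0, hnueq, ?_, ?_⟩
  · exact (mem_supp_initialForm_iff K n).mpr ⟨by rw [hnueq]; exact hβw, hβp⟩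
  · intro γ hγ
    obtain ⟨hw, hs⟩ := (mem_supp_initialForm_iff K n).mp hγ
    exact (mem_supp_initialForm_iff K n).mpr
      ⟨by rw [← hnueq]; exact hw, supp_trunc_subset K n N f hs⟩

theorem expSet_subset_of_pattern (r : (Fin n →₀ ℕ) → (Fin n →₀ ℕ) → Prop)
    (hr : IsWellOrder (Fin n →₀ ℕ) r) {a b : Fin n → ℝ} (ha : ∀ i, 0 < a i)
    (hb : ∀ i, 0 < b i) {N : ℕ} (hpat : SamePattern n N a b)
    (A : Subalgebra K (MvPowerSeries (Fin n) K))
    (hN : JSet K n N ⊆ (A : Set (MvPowerSeries (Fin n) K))) :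
    expSet K n r a (A : Set (MvPowerSeries (Fin n) K)) ⊆
      expSet K n r b (A : Set (MvPowerSeries (Fin n) K)) := by
  rintro β ⟨f, hfA, hf0, rfl⟩
  by_cases hdeg : N ≤ ∑ i, (exponent K n r a f) i
  · exact ⟨MvPowerSeries.monomial (exponent K n r a f) 1,
      hN (monomial_mem_JSet K n hdeg 1), monomial_ne_zero K n _,
      exponent_monomial K n r hr b _ one_ne_zero⟩
  · push_neg at hdeg
    obtain ⟨hβin, hβmax⟩ := exponent_spec K n r hr ha hf0
    obtain ⟨hp0, hnueq, hβinp, hsubin⟩ := trunc_initial_data K n ha hf0 hβin hdeg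
    have hpA : trunc K n N f ∈ A := by
      have : trunc K n N f = f - (f - trunc K n N f) := by ring
      rw [this]
      exact sub_mem hfA (hN (sub_trunc_mem_JSet K n N f))
    have hexp_p : exponent K n r a (trunc K n N f) = exponent K n r a f :=
      exponent_eq_of_max K n r hr hβinp (fun γ hγ => hβmax γ (hsubin hγ))
    have hip : initialForm K n a (trunc K n N f) = initialForm K n b (trunc K n N f) :=
      initialForm_pattern_eq K n ha hb hpat hp0 (supp_trunc_degLT K n N f)
    refine ⟨trunc K n N f, hpA, hp0, ?_⟩
    rw [← exponent_congr K n r hip, hexp_p]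

theorem expSet_eq_of_pattern (r : (Fin n →₀ ℕ) → (Fin n →₀ ℕ) → Prop)
    (hr : IsWellOrder (Fin n →₀ ℕ) r) {a b : Fin n → ℝ} (ha : ∀ i, 0 < a i)
    (hb : ∀ i, 0 < b i) {N : ℕ} (hpat : SamePattern n N a b)
    (A : Subalgebra K (MvPowerSeries (Fin n) K))
    (hN : JSet K n N ⊆ (A : Set (MvPowerSeries (Fin n) K))) :
    expSet K n r a (A : Set (MvPowerSeries (Fin n) K)) =
      expSet K n r b (A : Set (MvPowerSeries (Fin n) K)) :=
  Set.Subset.antisymm (expSet_subset_of_pattern K n r hr ha hb hpat A hN)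
    (expSet_subset_of_pattern K n r hr hb ha hpat.symm A hN)

theorem JSet_subset_closedAdjoin_initials (b : Fin n → ℝ) {N : ℕ}
    (A : Subalgebra K (MvPowerSeries (Fin n) K))
    (hN : JSet K n N ⊆ (A : Set (MvPowerSeries (Fin n) K))) :
    JSet K n N ⊆ (closedAdjoin K n
      {g | ∃ f ∈ (A : Set (MvPowerSeries (Fin n) K)), f ≠ 0 ∧ initialForm K n b f = g} :
        Set (MvPowerSeries (Fin n) K)) := by
  intro h hh M
  refine ⟨trunc K n M h, ?_, JSet_subset_pow K n M (sub_trunc_mem_JSet K n M h)⟩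
  have hfin : (supp K n (trunc K n M h)).Finite :=
    supp_finite_of_degLT K n (supp_trunc_degLT K n M h)
  rw [eq_sum_monomial K n hfin]
  refine Subalgebra.sum_mem _ fun α hα => ?_
  have hα' : α ∈ supp K n (trunc K n M h) := (Set.Finite.mem_toFinset _).mp hα
  have hdegα : N ≤ ∑ i, α i := by
    by_contra hc
    push_neg at hc
    refine hα' ?_
    rw [coeff_trunc]
    split_ifs with h2
    · exact hh α hc
    · rfl
  have hmono : MvPowerSeries.monomial α (MvPowerSeries.coeff α (trunc K n M h)) =
      (MvPowerSeries.coeff α (trunc K n M h)) • MvPowerSeries.monomial α (1 : K) := by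
    rw [← map_smul, smul_eq_mul, mul_one]
  rw [hmono]
  refine Subalgebra.smul_mem _ (Algebra.subset_adjoin ?_) _
  exact ⟨MvPowerSeries.monomial α 1, hN (monomial_mem_JSet K n hdegα 1),
    monomial_ne_zero K n α, initialForm_monomial K n b α one_ne_zero⟩

theorem initials_subset_of_pattern {a b : Fin n → ℝ} (ha : ∀ i, 0 < a i)
    (hb : ∀ i, 0 < b i) {N : ℕ} (hpat : SamePattern n N a b)
    (A : Subalgebra K (MvPowerSeries (Fin n) K))
    (hN : JSet K n N ⊆ (A : Set (MvPowerSeries (Fin n) K))) :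
    {g | ∃ f ∈ (A : Set (MvPowerSeries (Fin n) K)), f ≠ 0 ∧ initialForm K n a f = g} ⊆
      (closedAdjoin K n
        {g | ∃ f ∈ (A : Set (MvPowerSeries (Fin n) K)), f ≠ 0 ∧ initialForm K n b f = g} :
          Set (MvPowerSeries (Fin n) K)) := by
  rintro g ⟨f, hfA, hf0, rfl⟩
  by_cases hcase : ∃ β ∈ supp K n (initialForm K n a f), (∑ i, β i) < N
  · obtain ⟨β, hβin, hβdeg⟩ := hcase
    obtain ⟨hp0, hnueq, hβinp, hsubin⟩ := trunc_initial_data K n ha hf0 hβin hβdeg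
    have hpA : trunc K n N f ∈ A := by
      have : trunc K n N f = f - (f - trunc K n N f) := by ring
      rw [this]
      exact sub_mem hfA (hN (sub_trunc_mem_JSet K n N f))
    have hdiff : initialForm K n a f - initialForm K n a (trunc K n N f) ∈ JSet K n N := by
      intro α hα
      rw [map_sub, coeff_initialForm, coeff_initialForm, hnueq, coeff_trunc, if_pos hα]
      split_ifs with h2
      · exact sub_self _
      · exact sub_zero 0
    have hip : initialForm K n a (trunc K n N f) = initialForm K n b (trunc K n N f) :=
      initialForm_pattern_eq K n ha hb hpat hp0 (supp_trunc_degLT K n N f)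
    have hrepr : initialForm K n a f =
        initialForm K n b (trunc K n N f) +
          (initialForm K n a f - initialForm K n a (trunc K n N f)) := by
      rw [← hip]; ring
    rw [hrepr]
    refine Subalgebra.add_mem _ ?_ ?_
    · exact subset_closedAdjoin' K n _ ⟨trunc K n N f, hpA, hp0, rfl⟩
    · exact JSet_subset_closedAdjoin_initials K n b A hN hdiff
  · push_neg at hcase
    have hJ : initialForm K n a f ∈ JSet K n N := by
      intro α hα
      by_contra hc
      exact absurd (hcase α hc) (not_le.mpr hα)
    exact JSet_subset_closedAdjoin_initials K n b A hN hJ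

theorem inAlgebra_eq_of_pattern {a b : Fin n → ℝ} (ha : ∀ i, 0 < a i)
    (hb : ∀ i, 0 < b i) {N : ℕ} (hpat : SamePattern n N a b)
    (A : Subalgebra K (MvPowerSeries (Fin n) K))
    (hN : JSet K n N ⊆ (A : Set (MvPowerSeries (Fin n) K))) :
    inAlgebra K n a (A : Set (MvPowerSeries (Fin n) K)) =
      inAlgebra K n b (A : Set (MvPowerSeries (Fin n) K)) :=
  le_antisymm
    (closedAdjoin_le_closedAdjoin K n (initials_subset_of_pattern K n ha hb hpat A hN))
    (closedAdjoin_le_closedAdjoin K n (initials_subset_of_pattern K n hb ha hpat.symm A hN))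

theorem weight_smul (t : ℝ) (c : Fin n → ℝ) (α : Fin n →₀ ℕ) :
    weight n (t • c) α = t * weight n c α := by
  simp [weight, Finset.mul_sum, mul_assoc]

theorem weight_add_smul (t s : ℝ) (x y : Fin n → ℝ) (α : Fin n →₀ ℕ) :
    weight n (t • x + s • y) α = t * weight n x α + s * weight n y α := by
  simp [weight, Finset.mul_sum, ← Finset.sum_add_distrib, add_mul, mul_assoc]

theorem combo_lt {t s x1 x2 y1 y2 : ℝ} (ht : 0 ≤ t) (hs : 0 ≤ s) (hts : t + s = 1)
    (h1 : x1 < y1) (h2 : x2 < y2) : t * x1 + s * x2 < t * y1 + s * y2 := by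
  rcases ht.eq_or_lt with h | h
  · have hst : s = 1 := by linarith
    rw [← h, hst]
    simpa using h2
  · exact add_lt_add_of_lt_of_le (mul_lt_mul_of_pos_left h1 h)
      (mul_le_mul_of_nonneg_left h2.le hs)

/-- the standard fan of `A`: a finite partition of `(ℝ_{>0})^n` into convex
cones on which `exp(A,·)` and `in(A,·)` are constant. -/
theorem standard_fan
    (r : (Fin n →₀ ℕ) → (Fin n →₀ ℕ) → Prop) (hr : IsWellOrder (Fin n →₀ ℕ) r)
    (hradd : ∀ α β γ : Fin n →₀ ℕ, r α β → r (α + γ) (β + γ))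
    (s : ℕ) (f : Fin s → MvPowerSeries (Fin n) K) (hf : ∀ i, f i ≠ 0)
    (A : Subalgebra K (MvPowerSeries (Fin n) K)) (hA : A = closedAdjoin K n (Set.range f))
    (hlen : FiniteColength K n A) :
    ∃ P : Set (Set (Fin n → ℝ)), P.Finite ∧
      (∀ σ ∈ P, σ.Nonempty) ∧
      (⋃₀ P = {a : Fin n → ℝ | ∀ i, 0 < a i}) ∧
      (P.Pairwise fun σ τ => Disjoint σ τ) ∧
      ∀ σ ∈ P, Convex ℝ σ ∧
        (∀ b ∈ σ, ∀ t : ℝ, 0 < t → t • b ∈ σ) ∧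
        ∀ a ∈ σ, ∀ b ∈ σ,
          expSet K n r a (A : Set (MvPowerSeries (Fin n) K)) =
            expSet K n r b (A : Set (MvPowerSeries (Fin n) K)) ∧
          inAlgebra K n a (A : Set (MvPowerSeries (Fin n) K)) =
            inAlgebra K n b (A : Set (MvPowerSeries (Fin n) K)) := by
  classical
  obtain ⟨N, hN⟩ := exists_JSet_subset_A K n A (Set.range f) hA hlen
  haveI hfinS : Finite {α : Fin n →₀ ℕ // (∑ i, α i) < N} := (finite_degLT n N).to_subtype
  set pos : Set (Fin n → ℝ) := {a : Fin n → ℝ | ∀ i, 0 < a i} with hpos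
  set Φ : (Fin n → ℝ) →
      (({α : Fin n →₀ ℕ // (∑ i, α i) < N} × {α : Fin n →₀ ℕ // (∑ i, α i) < N}) → Prop) :=
    fun c p => weight n c p.1.1 ≤ weight n c p.2.1 with hΦ
  set cell : (Fin n → ℝ) → Set (Fin n → ℝ) := fun c => {x | x ∈ pos ∧ Φ x = Φ c} with hcell
  have hΦap : ∀ (c : Fin n → ℝ) (p), Φ c p = (weight n c p.1.1 ≤ weight n c p.2.1) := by
    intro c p; rw [hΦ]
  have hpatt : ∀ {x y : Fin n → ℝ}, Φ x = Φ y → SamePattern n N x y := by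
    intro x y h α β h1 h2
    have h3 := congrFun h (⟨α, h1⟩, ⟨β, h2⟩)
    rw [hΦap, hΦap] at h3
    exact iff_of_eq h3
  have hmemcell : ∀ {x c : Fin n → ℝ}, x ∈ cell c ↔ (x ∈ pos ∧ Φ x = Φ c) := by
    intro x c; rw [hcell]; rfl
  refine ⟨cell '' pos, ?_, ?_, ?_, ?_, ?_⟩
  · have himg : cell '' pos = (fun φ => {x | x ∈ pos ∧ Φ x = φ}) '' (Φ '' pos) := by
      rw [← Set.image_comp]
      rfl
    rw [himg]
    exact (Set.toFinite (Φ '' pos)).image _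
  · rintro τ ⟨c, hc, rfl⟩
    exact ⟨c, hmemcell.mpr ⟨hc, rfl⟩⟩
  · apply Set.Subset.antisymm
    · rintro x ⟨τ, ⟨c, hc, rfl⟩, hx⟩
      exact (hmemcell.mp hx).1
    · intro x hx
      exact ⟨cell x, ⟨x, hx, rfl⟩, hmemcell.mpr ⟨hx, rfl⟩⟩
  · rintro τ1 ⟨c1, hc1, rfl⟩ τ2 ⟨c2, hc2, rfl⟩ hne
    rw [Set.disjoint_left]
    intro x hx1 hx2
    refine hne ?_
    have h12 : Φ c1 = Φ c2 := by
      rw [← (hmemcell.mp hx1).2, (hmemcell.mp hx2).2]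
    simp only [hcell]
    rw [h12]
  · rintro τ ⟨c, hc, rfl⟩
    refine ⟨?_, ?_, ?_⟩
    · -- convexity
      intro x hx y hy t u ht hu htu
      obtain ⟨hxpos, hxΦ⟩ := hmemcell.mp hx
      obtain ⟨hypos, hyΦ⟩ := hmemcell.mp hy
      refine hmemcell.mpr ⟨?_, ?_⟩
      · intro i
        show 0 < t * x i + u * y i
        rcases ht.eq_or_lt with h | h
        · have hu1 : u = 1 := by linarith
          rw [← h, hu1]
          simpa using hypos i
        · exact add_pos_of_pos_of_nonneg (mul_pos h (hxpos i))
            (mul_nonneg hu (hypos i).le)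
      · funext p
        obtain ⟨⟨α, hα⟩, ⟨β, hβ⟩⟩ := p
        rw [hΦap, hΦap, weight_add_smul, weight_add_smul]
        have hxi : weight n x α ≤ weight n x β ↔ weight n c α ≤ weight n c β :=
          hpatt hxΦ α β hα hβ
        have hyi : weight n y α ≤ weight n y β ↔ weight n c α ≤ weight n c β :=
          hpatt hyΦ α β hα hβ
        by_cases hcc : weight n c α ≤ weight n c β
        · exact propext (iff_of_true
            (add_le_add (mul_le_mul_of_nonneg_left (hxi.mpr hcc) ht)
              (mul_le_mul_of_nonneg_left (hyi.mpr hcc) hu)) hcc)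
        · refine propext (iff_of_false ?_ hcc)
          have hxlt : weight n x β < weight n x α :=
            lt_of_not_ge fun hle => hcc (hxi.mp hle)
          have hylt : weight n y β < weight n y α :=
            lt_of_not_ge fun hle => hcc (hyi.mp hle)
          exact not_le.mpr (combo_lt ht hu htu hxlt hylt)
    · -- stability under positive scaling
      intro x hx t ht
      obtain ⟨hxpos, hxΦ⟩ := hmemcell.mp hx
      refine hmemcell.mpr ⟨?_, ?_⟩
      · intro i
        show 0 < t * x i
        exact mul_pos ht (hxpos i)
      · rw [← hxΦ]
        funext p
        obtain ⟨⟨α, hα⟩, ⟨β, hβ⟩⟩ := p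
        rw [hΦap, hΦap, weight_smul, weight_smul]
        exact propext (mul_le_mul_iff_right₀ ht)
    · -- constancy of exp and in
      intro x hx y hy
      obtain ⟨hxpos, hxΦ⟩ := hmemcell.mp hx
      obtain ⟨hypos, hyΦ⟩ := hmemcell.mp hy
      have hpat : SamePattern n N x y := hpatt (hxΦ.trans hyΦ.symm)
      exact ⟨expSet_eq_of_pattern K n r hr hxpos hypos hpat A hN,
        inAlgebra_eq_of_pattern K n hxpos hypos hpat A hN⟩

end CanonicalFan
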